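/- Let (R, 𝔪, K) be a Noetherian local ring of characteristic p of dimension d, f₁,…,f_t part of a system of parameters, I = (f₁,…,f_t), and J an 𝔪-primary ideal with I ⊆ J. Then for all e, the length λ(R/J^{[p^e]}) ≤ |V(p^e)| · λ(R/(I + J^{[p^e]})), where V(p^e) = {a ∈ ℕ^t : f₁^{a₁}⋯f_t^{a_t} ∉ J^{[p^e]}}. -/

import Mathlib

open Ideal Filter MeasureTheory

/-- The `q`-th Frobenius power of an ideal: the ideal generated by `q`-th powers of its
elements (used with `q = p ^ e`). -/
def Ideal.frobPow {R : Type*} [CommRing R] (J : Ideal R) (q : ℕ) : Ideal R :=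
  Ideal.span ((fun a => a ^ q) '' (J : Set R))

/-- The set `V` of exponent vectors `a ∈ ℕ^t` with `I₁^{a₁} ⋯ I_t^{a_t} ⊄ J'`. -/
def Vnu {R : Type*} [CommRing R] {t : ℕ} (I : Fin t → Ideal R) (J' : Ideal R) :
    Set (Fin t → ℕ) :=
  {a | ¬ (∏ i, I i ^ a i) ≤ J'}

/-- The length of an `A`-module `M`: the Krull dimension of its lattice of submodules. -/
noncomputable def modLength (A M : Type*) [CommRing A] [AddCommGroup M] [Module A M] : ℕ∞ :=
  (Order.krullDim (Submodule A M)).unbotD 0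

section Aux

noncomputable def nLen (α : Type*) [Preorder α] : ℕ∞ := ⨆ p : LTSeries α, (p.length : ℕ∞)

lemma modLength_eq_nLen (A M : Type*) [CommRing A] [AddCommGroup M] [Module A M] :
    modLength A M = nLen (Submodule A M) := by
  rw [modLength, Order.krullDim_eq_iSup_length, WithBot.unbotD_coe, nLen]

lemma nLen_eq_zero (α : Type*) [Preorder α] [Subsingleton α] : nLen α = 0 := by
  refine le_antisymm (iSup_le fun p => ?_) (zero_le)
  have : p.length = 0 := by
    by_contra h
    exact (p.step ⟨0, Nat.pos_of_ne_zero h⟩).ne (Subsingleton.elim _ _)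
  simp [this]

lemma nLen_le_of_strictMono {α β : Type*} [Preorder α] [Preorder β] (f : α → β)
    (hf : StrictMono f) : nLen α ≤ nLen β :=
  iSup_le fun p => le_iSup (fun q : LTSeries β => (q.length : ℕ∞)) (p.map f hf)

lemma exists_two_LTSeries {α β γ : Type*} [Preorder α] [Preorder β] [Preorder γ]
    (f : α → β) (g : α → γ) (hf : Monotone f) (hg : Monotone g)
    (h : ∀ a b : α, a < b → f a < f b ∨ g a < g b) :
    ∀ (n : ℕ) (p : LTSeries α), p.length = n →
      ∃ (P : LTSeries β) (Q : LTSeries γ), P.length + Q.length = p.length ∧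
        P.last ≤ f p.last ∧ Q.last ≤ g p.last := by
  intro n
  induction n with
  | zero =>
    intro p hp
    exact ⟨RelSeries.singleton _ (f p.last), RelSeries.singleton _ (g p.last),
      by simp [hp], le_rfl, le_rfl⟩
  | succ n ih =>
    intro p hp
    have hlen' : p.eraseLast.length = n := by
      simp [RelSeries.eraseLast, hp]
    obtain ⟨P, Q, hlen, hP, hQ⟩ := ih p.eraseLast hlen'
    have hrel : p.eraseLast.last < p.last :=
      p.eraseLast_last_rel_last (by omega)
    rcases h _ _ hrel with hc | hc
    · refine ⟨P.snoc (f p.last) (lt_of_le_of_lt hP hc), Q, ?_, by simp,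
        le_trans hQ (hg hrel.le)⟩
      simp only [RelSeries.snoc_length]
      omega
    · refine ⟨P, Q.snoc (g p.last) (lt_of_le_of_lt hQ hc), ?_,
        le_trans hP (hf hrel.le), by simp⟩
      simp only [RelSeries.snoc_length]
      omega

lemma nLen_le_add {α β γ : Type*} [Preorder α] [Preorder β] [Preorder γ]
    (f : α → β) (g : α → γ) (hf : Monotone f) (hg : Monotone g)
    (h : ∀ a b : α, a < b → f a < f b ∨ g a < g b) :
    nLen α ≤ nLen β + nLen γ := by
  refine iSup_le fun p => ?_
  obtain ⟨P, Q, hlen, -, -⟩ := exists_two_LTSeries f g hf hg h p.length p rfl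
  calc (p.length : ℕ∞) = (P.length : ℕ∞) + (Q.length : ℕ∞) := by
        rw [← hlen]; push_cast; ring
  _ ≤ nLen β + nLen γ :=
      add_le_add (le_iSup (fun q : LTSeries β => (q.length : ℕ∞)) P)
        (le_iSup (fun q : LTSeries γ => (q.length : ℕ∞)) Q)

variable {R : Type*} [CommRing R]

lemma modLength_le_of_surjective {M N : Type*} [AddCommGroup M] [Module R M]
    [AddCommGroup N] [Module R N] (φ : M →ₗ[R] N) (hφ : Function.Surjective φ) :
    modLength R N ≤ modLength R M := by
  rw [modLength_eq_nLen, modLength_eq_nLen]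
  have hmono : Monotone (Submodule.comap φ) := fun _ _ h => Submodule.comap_mono h
  exact nLen_le_of_strictMono (Submodule.comap φ)
    (hmono.strictMono_of_injective (Submodule.comap_injective_of_surjective hφ))

lemma modLength_eq_of_equiv {M N : Type*} [AddCommGroup M] [Module R M]
    [AddCommGroup N] [Module R N] (e : M ≃ₗ[R] N) :
    modLength R M = modLength R N := by
  rw [modLength_eq_nLen, modLength_eq_nLen]
  exact le_antisymm
    (nLen_le_of_strictMono _ (Submodule.orderIsoMapComap e).strictMono)
    (nLen_le_of_strictMono _ (Submodule.orderIsoMapComap e).symm.strictMono)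

lemma modLength_le_sub_add {M : Type*} [AddCommGroup M] [Module R M] (N : Submodule R M) :
    modLength R M ≤ modLength R N + modLength R (M ⧸ N) := by
  rw [modLength_eq_nLen, modLength_eq_nLen, modLength_eq_nLen]
  refine nLen_le_add (fun A => A.comap N.subtype) (fun A => A.map N.mkQ)
    (fun A B h => Submodule.comap_mono h) (fun A B h => Submodule.map_mono h) ?_
  intro A B hAB
  by_contra hcon
  push_neg at hcon
  obtain ⟨h1, h2⟩ := hcon
  have e1 : A.comap N.subtype = B.comap N.subtype :=
    ((Submodule.comap_mono hAB.le).lt_or_eq).resolve_left h1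
  have e2 : A.map N.mkQ = B.map N.mkQ :=
    ((Submodule.map_mono hAB.le).lt_or_eq).resolve_left h2
  have e1' : N ⊓ A = N ⊓ B := by
    have := congrArg (Submodule.map N.subtype) e1
    rwa [Submodule.map_comap_subtype, Submodule.map_comap_subtype] at this
  have e2' : N ⊔ A = N ⊔ B := by
    have := congrArg (Submodule.comap N.mkQ) e2
    rwa [Submodule.comap_map_mkQ, Submodule.comap_map_mkQ] at this
  have : A = B := by
    have h3 : (A ⊔ N) ⊓ B = A ⊔ (N ⊓ B) := sup_inf_assoc_of_le N hAB.le
    have h4 : (A ⊔ N) ⊓ B = B := by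
      rw [sup_comm, e2', ← sup_comm, inf_eq_right.mpr le_sup_left]
    rw [h4, ← e1', inf_comm, sup_inf_self] at h3
    exact h3.symm
  exact hAB.ne this

lemma modLength_quot_antitone {A B : Ideal R} (h : A ≤ B) :
    modLength R (R ⧸ B) ≤ modLength R (R ⧸ A) := by
  refine modLength_le_of_surjective (Submodule.mapQ A B LinearMap.id h) ?_
  intro x
  obtain ⟨r, rfl⟩ := Submodule.Quotient.mk_surjective B x
  exact ⟨Submodule.Quotient.mk r, by rw [Submodule.mapQ_apply]; rfl⟩

lemma modLength_top : modLength R (R ⧸ (⊤ : Ideal R)) = 0 := by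
  have : Subsingleton (R ⧸ (⊤ : Ideal R)) :=
    Submodule.Quotient.subsingleton_iff.mpr rfl
  rw [modLength_eq_nLen]
  exact nLen_eq_zero _

lemma modLength_span_singleton_le {A : Ideal R} (x : R ⧸ A) (C : Ideal R)
    (hC : ∀ c ∈ C, c • x = 0) :
    modLength R (Submodule.span R {x} : Submodule R (R ⧸ A)) ≤ modLength R (R ⧸ C) := by
  set φ := LinearMap.toSpanSingleton R (R ⧸ A) x with hφ
  have hker : C ≤ LinearMap.ker φ := fun c hc => by
    simpa [φ, LinearMap.toSpanSingleton] using hC c hc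
  have hrange : (Submodule.span R {x} : Submodule R (R ⧸ A)) = LinearMap.range φ :=
    LinearMap.span_singleton_eq_range R (R ⧸ A) x
  calc modLength R (Submodule.span R {x} : Submodule R (R ⧸ A))
      = modLength R (R ⧸ LinearMap.ker φ) := by
        rw [modLength_eq_of_equiv (LinearEquiv.ofEq _ _ hrange),
          modLength_eq_of_equiv φ.quotKerEquivRange]
  _ ≤ modLength R (R ⧸ C) := modLength_quot_antitone hker

lemma key_induction {R : Type*} [CommRing R] {t : ℕ} (f : Fin t → R) (J' : Ideal R)
    (V : Set (Fin t → ℕ)) (hV : ∀ a : Fin t → ℕ, a ∉ V → (∏ i, f i ^ a i) ∈ J') :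
    ∀ (n : ℕ) (S : Finset (Fin t → ℕ)), S.card = n →
      (∀ a ∈ S, ∀ b : Fin t → ℕ, a ≤ b → b ∈ V → b ∈ S) →
      modLength R (R ⧸ J') ≤
        modLength R (R ⧸ (J' ⊔ Ideal.span ((fun a : Fin t → ℕ => ∏ i, f i ^ a i) '' ↑S))) +
          (n : ℕ∞) * modLength R (R ⧸ (Ideal.span (Set.range f) ⊔ J')) := by
  set μ : (Fin t → ℕ) → R := fun a => ∏ i, f i ^ a i with hμ
  intro n
  induction n with
  | zero =>
    intro S hcard _
    rw [Finset.card_eq_zero] at hcard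
    subst hcard
    rw [Finset.coe_empty, Set.image_empty, Ideal.span_empty, sup_bot_eq]
    simp
  | succ n ih =>
    intro S hcard hclosed
    have hne : S.Nonempty := Finset.card_pos.mp (by omega)
    obtain ⟨a, haS, hamin⟩ := S.exists_min_image (fun a => ∑ i, a i) hne
    set S' : Finset (Fin t → ℕ) := S.erase a with hS'
    have hcard' : S'.card = n := by
      rw [hS', Finset.card_erase_of_mem haS, hcard]
      omega
    have hclosed' : ∀ x ∈ S', ∀ b : Fin t → ℕ, x ≤ b → b ∈ V → b ∈ S' := by
      intro x hx b hxb hbV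
      have hxS : x ∈ S := Finset.mem_of_mem_erase hx
      have hbS : b ∈ S := hclosed x hxS b hxb hbV
      refine Finset.mem_erase.mpr ⟨?_, hbS⟩
      rintro rfl
      have h1 : ∑ i, x i ≤ ∑ i, b i := Finset.sum_le_sum fun i _ => hxb i
      have h2 : ∑ i, b i ≤ ∑ i, x i := hamin x hxS
      have heq : ∀ i ∈ Finset.univ, x i = b i :=
        (Finset.sum_eq_sum_iff_of_le fun i _ => hxb i).mp (le_antisymm h1 h2)
      exact (Finset.ne_of_mem_erase hx) (funext fun i => heq i (Finset.mem_univ i))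
    set A : Ideal R := J' ⊔ Ideal.span (μ '' ↑S') with hA
    set B : Ideal R := J' ⊔ Ideal.span (μ '' ↑S) with hB
    set L : ℕ∞ := modLength R (R ⧸ (Ideal.span (Set.range f) ⊔ J')) with hL
    have hSins : (S : Set (Fin t → ℕ)) = insert a ↑S' := by
      rw [hS', Finset.coe_erase, Set.insert_diff_singleton]
      exact (Set.insert_eq_self.mpr (by exact_mod_cast haS)).symm
    have hBA : B = A ⊔ Ideal.span {μ a} := by
      rw [hB, hA, hSins, Set.image_insert_eq, Ideal.span_insert]
      rw [sup_comm (Ideal.span {μ a}) _, ← sup_assoc]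
    have hAB : A ≤ B := by rw [hBA]; exact le_sup_left
    have hmul : ∀ i : Fin t, f i * μ a ∈ A := by
      intro i
      have hfa : μ (a + Pi.single i 1) = μ a * f i := by
        rw [hμ]
        simp only [Pi.add_apply, pow_add]
        rw [Finset.prod_mul_distrib]
        congr 1
        rw [Finset.prod_eq_single i
          (fun j _ hj => by rw [Pi.single_eq_of_ne hj, pow_zero])
          (fun h => absurd (Finset.mem_univ i) h)]
        rw [Pi.single_eq_same, pow_one]
      rw [mul_comm, ← hfa]
      by_cases hb : (a + Pi.single i 1) ∈ V
      · have hbS : (a + Pi.single i 1) ∈ S := by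
          refine hclosed a haS _ (fun j => le_self_add) hb
        have hbS' : (a + Pi.single i 1) ∈ S' := by
          refine Finset.mem_erase.mpr ⟨?_, hbS⟩
          intro hcon
          have := congrFun hcon i
          simp [Pi.single_eq_same] at this
        exact Submodule.mem_sup_right (Ideal.subset_span (Set.mem_image_of_mem μ hbS'))
      · exact Submodule.mem_sup_left (hV _ hb)
    have hJA : J' ≤ A := le_sup_left
    -- the annihilator bound
    have hker : Ideal.span (Set.range f) ⊔ J' ≤
        LinearMap.ker (LinearMap.toSpanSingleton R (R ⧸ A) (A.mkQ (μ a))) := by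
      apply sup_le
      · rw [Ideal.span_le]
        rintro - ⟨i, rfl⟩
        simp only [SetLike.mem_coe, LinearMap.mem_ker, LinearMap.toSpanSingleton_apply,
          Submodule.mkQ_apply]
        rw [← Submodule.Quotient.mk_smul, smul_eq_mul]
        exact (Submodule.Quotient.mk_eq_zero A).mpr (hmul i)
      · intro c hcJ
        simp only [SetLike.mem_coe, LinearMap.mem_ker, LinearMap.toSpanSingleton_apply,
          Submodule.mkQ_apply]
        rw [← Submodule.Quotient.mk_smul, smul_eq_mul]
        exact (Submodule.Quotient.mk_eq_zero A).mpr (hJA (Ideal.mul_mem_right _ _ hcJ))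
    have step : modLength R (R ⧸ A) ≤ modLength R (R ⧸ B) + L := by
      have h1 := modLength_le_sub_add (R := R) (M := R ⧸ A) (Submodule.map A.mkQ B)
      have heq : modLength R ((R ⧸ A) ⧸ Submodule.map A.mkQ B) = modLength R (R ⧸ B) :=
        modLength_eq_of_equiv (Submodule.quotientQuotientEquivQuotient A B hAB)
      have hN : Submodule.map A.mkQ B = Submodule.span R {A.mkQ (μ a)} := by
        rw [hBA]
        rw [Submodule.map_sup]
        have hbot : Submodule.map A.mkQ A = ⊥ := by
          exact Submodule.mkQ_map_self A
        rw [hbot, bot_sup_eq, Ideal.span, Submodule.map_span, Set.image_singleton]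
      have h2 : modLength R (Submodule.map A.mkQ B : Submodule R (R ⧸ A)) ≤ L := by
        rw [hN, hL]
        apply modLength_span_singleton_le
        intro c hc
        have := hker hc
        rw [LinearMap.mem_ker, LinearMap.toSpanSingleton_apply] at this
        exact this
      calc modLength R (R ⧸ A)
          ≤ modLength R (Submodule.map A.mkQ B : Submodule R (R ⧸ A)) +
            modLength R ((R ⧸ A) ⧸ Submodule.map A.mkQ B) := h1
        _ ≤ L + modLength R (R ⧸ B) := add_le_add h2 (le_of_eq heq)
        _ = modLength R (R ⧸ B) + L := add_comm _ _
    have hih := ih S' hcard' hclosed'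
    calc modLength R (R ⧸ J')
        ≤ modLength R (R ⧸ A) + (n : ℕ∞) * L := hih
      _ ≤ (modLength R (R ⧸ B) + L) + (n : ℕ∞) * L := add_le_add_left step _
      _ = modLength R (R ⧸ B) + ((n + 1 : ℕ) : ℕ∞) * L := by push_cast; ring


end Aux

/-- For `f₁,…,f_t` part of a system of parameters of a Noetherian local ring, `I = (f)`,
and `J` an `𝔪`-primary ideal containing `I`:
`λ(R/J^{[p^e]}) ≤ |V(p^e)| · λ(R/(I + J^{[p^e]}))` for all `e`. -/
theorem stmt17 {R : Type*} [CommRing R] [IsNoetherianRing R] [IsLocalRing R] (p : ℕ)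
    [Fact p.Prime] [CharP R p] {t : ℕ} (f : Fin t → R)
    (hsop : ∃ (s : ℕ) (g : Fin s → R),
      ringKrullDim R = ((t + s : ℕ) : WithBot (WithTop ℕ)) ∧
      (Ideal.span (Set.range f ∪ Set.range g)).radical = IsLocalRing.maximalIdeal R)
    (I J : Ideal R) (hI : I = Ideal.span (Set.range f))
    (hJprim : J.radical = IsLocalRing.maximalIdeal R) (hIJ : I ≤ J) (e : ℕ) :
    modLength R (R ⧸ J.frobPow (p ^ e)) ≤
      ((Vnu (fun i => Ideal.span {f i}) (J.frobPow (p ^ e))).ncard : ℕ∞) *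
        modLength R (R ⧸ (I ⊔ J.frobPow (p ^ e))) := by
  subst hI
  set q := p ^ e with hq
  set J' := J.frobPow q with hJ'
  set μ : (Fin t → ℕ) → R := fun a => ∏ i, f i ^ a i with hμ
  have hprod : ∀ a : Fin t → ℕ, (∏ i, Ideal.span {f i} ^ a i) = Ideal.span {μ a} := by
    intro a
    simp_rw [Ideal.span_singleton_pow]
    exact Ideal.prod_span_singleton _ _
  set V : Set (Fin t → ℕ) := {a | μ a ∉ J'} with hV
  have hVnu : Vnu (fun i => Ideal.span {f i}) J' = V := by
    ext a
    simp only [Vnu, Set.mem_setOf_eq, hprod, Ideal.span_singleton_le_iff_mem, hV]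
  have hqpos : 0 < q := pow_pos (Nat.Prime.pos (Fact.out)) e
  have hJ'J : J' ≤ J := by
    rw [hJ', Ideal.frobPow, Ideal.span_le]
    rintro - ⟨x, hx, rfl⟩
    exact Ideal.pow_mem_of_mem J hx q hqpos
  have hmne : (IsLocalRing.maximalIdeal R) ≠ ⊤ :=
    (IsLocalRing.maximalIdeal.isMaximal R).ne_top
  have hJtop : J ≠ ⊤ := by
    intro h
    rw [h, Ideal.radical_top] at hJprim
    exact hmne hJprim.symm
  have hJ'top : J' ≠ ⊤ := fun h => hJtop (top_le_iff.mp (h ▸ hJ'J))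
  have hJrad : J ≤ J'.radical := by
    intro x hx
    exact Ideal.mem_radical_iff.mpr ⟨q, Ideal.subset_span ⟨x, hx, rfl⟩⟩
  have hmle : IsLocalRing.maximalIdeal R ≤ J'.radical := by
    rw [← hJprim]
    exact le_trans (Ideal.radical_mono hJrad) (le_of_eq J'.radical_idem)
  obtain ⟨N, hN⟩ := Ideal.exists_pow_le_of_le_radical_of_fg hmle
    (IsNoetherian.noetherian _)
  obtain ⟨s, g, -, hrad⟩ := hsop
  have fmem : ∀ i, f i ∈ IsLocalRing.maximalIdeal R := fun i =>
    hrad ▸ Ideal.le_radical (Ideal.subset_span (Set.mem_union_left _ (Set.mem_range_self i)))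
  have hVbox : V ⊆ Set.pi Set.univ (fun _ => Set.Iio N) := by
    intro a ha i _
    simp only [Set.mem_Iio]
    by_contra hcon
    push_neg at hcon
    apply ha
    have h1 : f i ^ a i ∈ J' := by
      have : f i ^ a i = f i ^ N * f i ^ (a i - N) := by
        rw [← pow_add, Nat.add_sub_cancel' hcon]
      rw [this]
      exact Ideal.mul_mem_right _ _ (hN (Ideal.pow_mem_pow (fmem i) N))
    have h2 : μ a = f i ^ a i * ∏ j ∈ Finset.univ.erase i, f j ^ a j :=
      (Finset.mul_prod_erase Finset.univ _ (Finset.mem_univ i)).symm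
    rw [h2]
    exact Ideal.mul_mem_right _ _ h1
  have hVfin : V.Finite :=
    (Set.Finite.pi (fun _ => Set.finite_Iio N)).subset hVbox
  set S : Finset (Fin t → ℕ) := hVfin.toFinset with hS
  have hcardS : V.ncard = S.card := Set.ncard_eq_toFinset_card V hVfin
  have hclosed : ∀ a ∈ S, ∀ b : Fin t → ℕ, a ≤ b → b ∈ V → b ∈ S :=
    fun a _ b _ hb => hVfin.mem_toFinset.mpr hb
  have hV' : ∀ a : Fin t → ℕ, a ∉ V → μ a ∈ J' := fun a ha => not_not.mp ha
  have hkey := key_induction f J' V hV' S.card S rfl hclosed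
  have htop : J' ⊔ Ideal.span (μ '' ↑S) = ⊤ := by
    rw [Ideal.eq_top_iff_one]
    have h0V : (0 : Fin t → ℕ) ∈ V := by
      rw [hV, Set.mem_setOf_eq]
      have : μ 0 = 1 := by simp [hμ]
      rw [this]
      exact fun h => hJ'top ((Ideal.eq_top_iff_one J').mpr h)
    have h0S : (0 : Fin t → ℕ) ∈ S := hVfin.mem_toFinset.mpr h0V
    have : μ 0 ∈ Ideal.span (μ '' ↑S) :=
      Ideal.subset_span (Set.mem_image_of_mem μ h0S)
    have h1 : μ 0 = 1 := by simp [hμ]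
    exact Submodule.mem_sup_right (h1 ▸ this)
  rw [htop, modLength_top, zero_add] at hkey
  rw [hVnu, hcardS]
  exact hkey
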